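/- Monotonicity of valuations under inclusion of strategies: if σ_a ⊆ σ_b are both reasonable player-0 strategies, then V_{σ_a}(s) ≼ V_{σ_b}(s) for all nodes s. -/

import Mathlib

open scoped Classical

/-- The order `≺` on integer color profiles `ℤ^d`: compare at the largest index where
they differ; at an even index the larger entry wins, at an odd index the smaller one. -/
def FinLt {d : ℕ} (p q : Fin d → ℤ) : Prop :=
  ∃ k : Fin d, p k ≠ q k ∧ (∀ j, k < j → p j = q j) ∧
    ((Even (k : ℕ) ∧ p k < q k) ∨ (Odd (k : ℕ) ∧ q k < p k))

/-- Reflexive closure `≼` of `FinLt`. -/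
def FinLe {d : ℕ} (p q : Fin d → ℤ) : Prop := p = q ∨ FinLt p q

/-- Color profiles: `ℤ^d` together with `-∞` (`bot`) and `∞` (`top`). -/
inductive Prof (d : ℕ) where
  | bot : Prof d
  | fin : (Fin d → ℤ) → Prof d
  | top : Prof d

/-- The order `≺` on color profiles: `-∞` is the bottom element, `∞` the top element,
finite profiles are compared by `FinLt`. -/
def Prof.Lt {d : ℕ} : Prof d → Prof d → Prop
  | .bot, .bot => False
  | .bot, .fin _ => True
  | .bot, .top => True
  | .fin _, .bot => False
  | .fin p, .fin q => FinLt p q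
  | .fin _, .top => True
  | .top, _ => False

/-- Reflexive closure `≼` of `Prof.Lt`. -/
def Prof.Le {d : ℕ} (p q : Prof d) : Prop := p = q ∨ Prof.Lt p q

/-- Adding a vector in `ℤ^d` to a profile; `±∞` are absorbing. -/
def Prof.add {d : ℕ} : Prof d → (Fin d → ℤ) → Prof d
  | .bot, _ => .bot
  | .fin p, q => .fin (p + q)
  | .top, _ => .top

/-- A parity game arena: a finite directed graph, each node owned by player 0 or 1 and
colored by a color in `{0,…,d-1}`; every node has at least one successor. -/
structure PGA (V : Type) (d : ℕ) where
  edge : V → V → Prop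
  owner : V → Fin 2
  color : V → Fin d
  succ : ∀ v, ∃ w, edge v w

variable {V : Type} {d : ℕ}

/-- The profile `℘(s)` of a single vertex: the unit vector at its color. -/
def unitProf (A : PGA V d) (s : V) : Fin d → ℤ := fun k => if A.color s = k then 1 else 0

/-- The color profile `℘(π)` of a finite sequence of vertices: how often each color occurs. -/
def listProf (A : PGA V d) (L : List V) : Fin d → ℤ := fun k => ((L.map A.color).count k : ℤ)

/-- `℘(s) + p` for a vertex `s` and a profile `p`. -/
def addV (A : PGA V d) (s : V) (p : Prof d) : Prof d := p.add (unitProf A s)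

/-- Edges of the escape arena `A_⊥` over `Option V`, where `none` is the sink `⊥`:
all edges of `A`, plus an edge from every player-0 node to `⊥`; `⊥` has no outgoing edges. -/
def EdgeB (A : PGA V d) : Option V → Option V → Prop
  | some u, some v => A.edge u v
  | some u, none => A.owner u = 0
  | none, _ => False

/-- A (memoryless, possibly non-deterministic) strategy of player 0 in `A_⊥`:
a set of player-0 edges giving every player-0 node at least one successor. -/
def Strategy0 (A : PGA V d) (σ : V → Option V → Prop) : Prop :=
  (∀ s t, σ s t → A.owner s = 0 ∧ EdgeB A (some s) t) ∧
  (∀ s, A.owner s = 0 → ∃ t, σ s t)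

/-- A (memoryless, possibly non-deterministic) strategy of player 1 (who never moves to `⊥`). -/
def Strategy1 (A : PGA V d) (τ : V → V → Prop) : Prop :=
  (∀ s t, τ s t → A.owner s = 1 ∧ A.edge s t) ∧
  (∀ s, A.owner s = 1 → ∃ t, τ s t)

/-- A strategy is deterministic if it picks at most one successor per node. -/
def Deterministic (σ : V → Option V → Prop) : Prop :=
  ∀ s t t', σ s t → σ s t' → t = t'

/-- Edges of `A_⊥` restricted to a player-0 strategy `σ` that stay inside `V`
(cycles of `A_⊥|σ` never pass through `⊥`). -/
def EdgeSig (A : PGA V d) (σ : V → Option V → Prop) (u v : V) : Prop :=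
  (A.owner u = 1 ∧ A.edge u v) ∨ σ u (some v)

/-- A (nonempty) cycle in `A_⊥|σ`: consecutive edges plus the wrap-around edge. -/
def CycleIn (A : PGA V d) (σ : V → Option V → Prop) (L : List V) : Prop :=
  L ≠ [] ∧ List.Chain' (EdgeSig A σ) L ∧
  ∀ a b, L.head? = some a → L.getLast? = some b → EdgeSig A σ b a

/-- A player-0 strategy is reasonable if `A_⊥|σ` has no 1-dominated cycle,
i.e. on every cycle the dominating (maximal) color is even. -/
def Reasonable (A : PGA V d) (σ : V → Option V → Prop) : Prop :=
  ∀ L, CycleIn A σ L → ∀ v ∈ L, (∀ w ∈ L, A.color w ≤ A.color v) → Even ((A.color v : ℕ))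

/-- One step of a play in `A_⊥` with player 0 using `σ` and player 1 using `τ`;
the sink `⊥` is absorbing. -/
def PlayStep (A : PGA V d) (σ : V → Option V → Prop) (τ : V → V → Prop) :
    Option V → Option V → Prop
  | none, y => y = none
  | some u, y => (A.owner u = 0 ∧ σ u y) ∨ (A.owner u = 1 ∧ ∃ v, y = some v ∧ τ u v)

/-- A play from `s` in `A_⊥|σ,τ` (modelled with absorbing sink). -/
def IsPlay (A : PGA V d) (σ : V → Option V → Prop) (τ : V → V → Prop)
    (s : V) (π : ℕ → Option V) : Prop :=
  π 0 = some s ∧ ∀ n, PlayStep A σ τ (π n) (π (n + 1))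

/-- One step of a play in `A_⊥` with player 0 using `σ`, player 1 unconstrained. -/
def PlayStepB (A : PGA V d) (σ : V → Option V → Prop) : Option V → Option V → Prop
  | none, y => y = none
  | some u, y => (A.owner u = 0 ∧ σ u y) ∨ (A.owner u = 1 ∧ ∃ v, y = some v ∧ A.edge u v)

/-- A play from `s` in `A_⊥|σ` against an arbitrary player 1. -/
def IsPlayB (A : PGA V d) (σ : V → Option V → Prop) (s : V) (π : ℕ → Option V) : Prop :=
  π 0 = some s ∧ ∀ n, PlayStepB A σ (π n) (π (n + 1))

/-- Color `k` occurs at position `n` of the play `π`. -/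
def ColorAt (A : PGA V d) (π : ℕ → Option V) (n : ℕ) (k : Fin d) : Prop :=
  ∃ v, π n = some v ∧ A.color v = k

/-- An infinite play of `A_⊥` (never reaching `⊥`) is won by player 0 iff the maximal color
occurring infinitely often is even. -/
def Won0B (A : PGA V d) (π : ℕ → Option V) : Prop :=
  ∃ k : Fin d, Even ((k : ℕ)) ∧ (∀ N, ∃ n ≥ N, ColorAt A π n k) ∧
    ∀ j : Fin d, k < j → ∃ N, ∀ n ≥ N, ¬ ColorAt A π n j

/-- The value `℘(π)` of a play in `A_⊥`: for a finite play (reaching `⊥`), the color profile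
of its vertices; for an infinite play, `∞` if player 0 wins it and `-∞` otherwise. -/
noncomputable def PlayValue (A : PGA V d) (π : ℕ → Option V) : Prof d :=
  if h : ∃ n, π n = none then
    .fin (fun k =>
      (((Finset.range (Nat.find h)).filter (fun n => ColorAt A π n k)).card : ℤ))
  else if Won0B A π then .top else .bot

/-- `p` is the `≺`-maximum of the set `S` of profiles. -/
def IsMaxOf {d : ℕ} (S : Set (Prof d)) (p : Prof d) : Prop := p ∈ S ∧ ∀ q ∈ S, Prof.Le q p

/-- `p` is the `≺`-minimum of the set `S` of profiles. -/
def IsMinOf {d : ℕ} (S : Set (Prof d)) (p : Prof d) : Prop := p ∈ S ∧ ∀ q ∈ S, Prof.Le p q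

/-- `W` is the valuation `𝒱_σ` of the player-0 strategy `σ`: `W(⊥) = ō`, and `W(s)` is the
`≺`-minimal value player 1 can guarantee (by a memoryless strategy) in any play from `s`
in `A_⊥|σ`. -/
def IsValuation (A : PGA V d) (σ : V → Option V → Prop) (W : Option V → Prof d) : Prop :=
  W none = .fin 0 ∧
  ∀ s : V, IsMinOf
    { p | ∃ τ, Strategy1 A τ ∧
        IsMaxOf { q | ∃ π, IsPlay A σ τ s π ∧ q = PlayValue A π } p }
    (W (some s))

/-- `(s,t)` is an improvement of `σ` w.r.t. the valuation `W`: a player-0 edge with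
`W(s) ≼ ℘(s) + W(t)`.  `I_σ` is the set (strategy) of all improvements. -/
def Improvement (A : PGA V d) (W : Option V → Prof d) (s : V) (t : Option V) : Prop :=
  A.owner s = 0 ∧ EdgeB A (some s) t ∧ Prof.Le (W (some s)) (addV A s (W t))

/-- `(s,t)` is a strict improvement of `σ` w.r.t. `W`: a player-0 edge with
`W(s) ≺ ℘(s) + W(t)`. -/
def StrictImp (A : PGA V d) (W : Option V → Prof d) (s : V) (t : Option V) : Prop :=
  A.owner s = 0 ∧ EdgeB A (some s) t ∧ Prof.Lt (W (some s)) (addV A s (W t))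

/-- A memoryless strategy of player 0 in the original parity game arena `A`. -/
def Strat0A (A : PGA V d) (σ : V → V → Prop) : Prop :=
  (∀ s t, σ s t → A.owner s = 0 ∧ A.edge s t) ∧ (∀ s, A.owner s = 0 → ∃ t, σ s t)

/-- A play in `A` from `s` where player 0 follows `σ` and player 1 is unconstrained. -/
def PlayA (A : PGA V d) (σ : V → V → Prop) (s : V) (π : ℕ → V) : Prop :=
  π 0 = s ∧ ∀ n, (A.owner (π n) = 0 → σ (π n) (π (n + 1))) ∧
    (A.owner (π n) = 1 → A.edge (π n) (π (n + 1)))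

/-- Parity winning condition in `A` for player 0: the maximal color seen infinitely often is even. -/
def Won0A (A : PGA V d) (π : ℕ → V) : Prop :=
  ∃ k : Fin d, Even ((k : ℕ)) ∧ (∀ N, ∃ n ≥ N, A.color (π n) = k) ∧
    ∀ j : Fin d, k < j → ∃ N, ∀ n ≥ N, A.color (π n) ≠ j

/-- Player 0 wins the node `s` of the parity game arena `A` (with a memoryless strategy). -/
def Win0 (A : PGA V d) (s : V) : Prop :=
  ∃ σ, Strat0A A σ ∧ ∀ π, PlayA A σ s π → Won0A A π

/-- An acyclic path of `A_⊥` terminating in `⊥`: pairwise distinct vertices, consecutive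
edges of `A`, and the last vertex owned by player 0 (so it has the edge to `⊥`). -/
def AcyclicToBot (A : PGA V d) (L : List V) : Prop :=
  L.Nodup ∧ List.Chain' A.edge L ∧ ∀ b, L.getLast? = some b → A.owner b = 0


section OrderLemmas
variable {d : ℕ} {p q r : Fin d → ℤ}

lemma finLt_trans (h1 : FinLt p q) (h2 : FinLt q r) : FinLt p r := by
  obtain ⟨k1, hne1, heq1, hc1⟩ := h1
  obtain ⟨k2, hne2, heq2, hc2⟩ := h2
  rcases lt_trichotomy k1 k2 with hlt | heq | hgt
  · refine ⟨k2, ?_, fun j hj => (heq1 j (hlt.trans hj)).trans (heq2 j hj), ?_⟩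
    · rw [heq1 k2 hlt]; exact hne2
    · rw [heq1 k2 hlt]; exact hc2
  · subst heq
    rcases hc1 with ⟨he, hlt1⟩ | ⟨ho, hlt1⟩
    · rcases hc2 with ⟨_, hlt2⟩ | ⟨ho2, _⟩
      · exact ⟨k1, (hlt1.trans hlt2).ne, fun j hj => (heq1 j hj).trans (heq2 j hj),
          Or.inl ⟨he, hlt1.trans hlt2⟩⟩
      · exact absurd he (Nat.not_even_iff_odd.mpr ho2)
    · rcases hc2 with ⟨he2, _⟩ | ⟨_, hlt2⟩
      · exact absurd he2 (Nat.not_even_iff_odd.mpr ho)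
      · exact ⟨k1, (hlt2.trans hlt1).ne', fun j hj => (heq1 j hj).trans (heq2 j hj),
          Or.inr ⟨ho, hlt2.trans hlt1⟩⟩
  · refine ⟨k1, ?_, fun j hj => (heq1 j hj).trans (heq2 j (hgt.trans hj)), ?_⟩
    · rw [← heq2 k1 hgt]; exact hne1
    · rw [← heq2 k1 hgt]; exact hc1

lemma finLe_trans (h1 : FinLe p q) (h2 : FinLe q r) : FinLe p r := by
  rcases h1 with rfl | h1
  · exact h2
  · rcases h2 with rfl | h2
    · exact Or.inr h1
    · exact Or.inr (finLt_trans h1 h2)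

lemma finLt_trichot (h : p ≠ q) : FinLt p q ∨ FinLt q p := by
  have hex : ∃ k, p k ≠ q k := by
    by_contra hc; push_neg at hc; exact h (funext hc)
  classical
  set D : Finset (Fin d) := Finset.univ.filter (fun k => p k ≠ q k) with hD
  have hne : D.Nonempty := by
    obtain ⟨k, hk⟩ := hex
    exact ⟨k, by simp [hD, hk]⟩
  set k := D.max' hne with hk
  have hkmem : k ∈ D := D.max'_mem hne
  have hkne : p k ≠ q k := by simpa [hD] using hkmem
  have heqa : ∀ j, k < j → p j = q j := by
    intro j hj
    by_contra hc
    exact absurd (D.le_max' j (by simp [hD, hc])) (not_le.mpr hj)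
  rcases Nat.even_or_odd (k : ℕ) with he | ho
  · rcases lt_or_gt_of_ne hkne with hl | hl
    · exact Or.inl ⟨k, hkne, heqa, Or.inl ⟨he, hl⟩⟩
    · exact Or.inr ⟨k, hkne.symm, fun j hj => (heqa j hj).symm, Or.inl ⟨he, hl⟩⟩
  · rcases lt_or_gt_of_ne hkne with hl | hl
    · exact Or.inr ⟨k, hkne.symm, fun j hj => (heqa j hj).symm, Or.inr ⟨ho, hl⟩⟩
    · exact Or.inl ⟨k, hkne, heqa, Or.inr ⟨ho, hl⟩⟩

lemma finset_max (F : Finset (Fin d → ℤ)) (h : F.Nonempty) :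
    ∃ p ∈ F, ∀ q ∈ F, FinLe q p := by
  classical
  induction F using Finset.induction_on with
  | empty => exact absurd h (by simp)
  | @insert a F' ha ih =>
    rcases F'.eq_empty_or_nonempty with rfl | hne
    · exact ⟨a, by simp, by simp [FinLe]⟩
    · obtain ⟨p, hpF, hpmax⟩ := ih hne
      by_cases hap : FinLe a p
      · refine ⟨p, by simp [hpF], ?_⟩
        intro q hq
        rcases Finset.mem_insert.mp hq with rfl | hq
        · exact hap
        · exact hpmax q hq
      · have hpa : FinLt p a := by
          rcases em (a = p) with rfl | hne2
          · exact absurd (Or.inl rfl) hap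
          · rcases finLt_trichot hne2 with h1 | h1
            · exact absurd (Or.inr h1) hap
            · exact h1
        refine ⟨a, by simp, ?_⟩
        intro q hq
        rcases Finset.mem_insert.mp hq with rfl | hq
        · exact Or.inl rfl
        · exact finLe_trans (hpmax q hq) (Or.inr hpa)

lemma profLe_top (q : Prof d) : Prof.Le q Prof.top := by
  cases q with
  | bot => exact Or.inr trivial
  | fin p => exact Or.inr trivial
  | top => exact Or.inl rfl

lemma profLt_trans {a b c : Prof d} (h1 : Prof.Lt a b) (h2 : Prof.Lt b c) : Prof.Lt a c := by
  cases a <;> cases b <;> cases c <;>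
    simp_all [Prof.Lt] <;> exact finLt_trans h1 h2

lemma profLe_trans {a b c : Prof d} (h1 : Prof.Le a b) (h2 : Prof.Le b c) : Prof.Le a c := by
  rcases h1 with rfl | h1
  · exact h2
  · rcases h2 with rfl | h2
    · exact Or.inr h1
    · exact Or.inr (profLt_trans h1 h2)

end OrderLemmas

section GameLemmas
variable {V : Type} {d : ℕ}

lemma fin2_cases (x : Fin 2) : x = 0 ∨ x = 1 := by omega

lemma none_absorb {A : PGA V d} {σ : V → Option V → Prop} {τ : V → V → Prop}
    {π : ℕ → Option V} (hstep : ∀ n, PlayStep A σ τ (π n) (π (n + 1)))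
    {m : ℕ} (hm : π m = none) : ∀ k, m ≤ k → π k = none := by
  have key : ∀ j, π (m + j) = none := by
    intro j
    induction j with
    | zero => simpa using hm
    | succ n ih =>
      have := hstep (m + n)
      rw [ih] at this
      simpa [PlayStep, ← Nat.add_assoc] using this
  intro k hk
  have : k = m + (k - m) := by omega
  rw [this]; exact key _

/-- Every pair of strategies admits a play from every vertex. -/
lemma exists_play (A : PGA V d) {σ : V → Option V → Prop} {τ : V → V → Prop}
    (hσ : Strategy0 A σ) (hτ : Strategy1 A τ) (s : V) :
    ∃ π, IsPlay A σ τ s π := by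
  classical
  have next : ∀ x : Option V, ∃ y, PlayStep A σ τ x y := by
    intro x
    cases x with
    | none => exact ⟨none, rfl⟩
    | some u =>
      rcases fin2_cases (A.owner u) with h0 | h1
      · obtain ⟨t, ht⟩ := hσ.2 u h0
        exact ⟨t, Or.inl ⟨h0, ht⟩⟩
      · obtain ⟨t, ht⟩ := hτ.2 u h1
        exact ⟨some t, Or.inr ⟨h1, t, rfl, ht⟩⟩
  choose f hf using next
  refine ⟨fun n => f^[n] (some s), by simp, fun n => ?_⟩
  show PlayStep A σ τ (f^[n] (some s)) (f^[n + 1] (some s))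
  rw [Function.iterate_succ_apply']
  exact hf _

lemma play_mono {A : PGA V d} {σa σb : V → Option V → Prop} {τ : V → V → Prop}
    (hsub : ∀ s t, σa s t → σb s t) {s : V} {π : ℕ → Option V}
    (h : IsPlay A σa τ s π) : IsPlay A σb τ s π := by
  refine ⟨h.1, fun n => ?_⟩
  have := h.2 n
  cases hx : π n with
  | none => rw [hx] at this; exact this
  | some u =>
    rw [hx] at this
    rcases this with ⟨h0, hσ⟩ | h1
    · exact Or.inl ⟨h0, hsub _ _ hσ⟩
    · exact Or.inr h1

end GameLemmas

section InfLemmas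
variable {V : Type} {d : ℕ}

lemma infinite_play_top [Fintype V] (A : PGA V d) {σ : V → Option V → Prop}
    {τ : V → V → Prop} (hτ : Strategy1 A τ) (hr : Reasonable A σ) {s : V}
    {π : ℕ → Option V} (hp : IsPlay A σ τ s π) (hinf : ∀ n, π n ≠ none) :
    PlayValue A π = Prof.top := by
  classical
  have hex : ∀ n, ∃ v, π n = some v := fun n => Option.ne_none_iff_exists'.mp (hinf n)
  choose f hf using hex
  have hedge : ∀ n, EdgeSig A σ (f n) (f (n + 1)) := by
    intro n
    have hstep := hp.2 n
    rw [hf n, hf (n + 1)] at hstep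
    rcases hstep with ⟨h0, hσ⟩ | ⟨h1, v, hv, hτv⟩
    · exact Or.inr hσ
    · obtain rfl : v = f (n + 1) := by injection hv.symm
      exact Or.inl ⟨h1, (hτ.1 _ _ hτv).2⟩
  set I : Set V := {v | ∀ N, ∃ n ≥ N, f n = v} with hI
  have hnotI : ∀ v, v ∉ I → ∃ N, ∀ n ≥ N, f n ≠ v := by
    intro v hv
    simp only [hI, Set.mem_setOf_eq, not_forall] at hv
    obtain ⟨N, hN⟩ := hv
    push_neg at hN
    exact ⟨N, hN⟩
  choose! N0 hN0 using hnotI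
  set M := Finset.univ.sup N0 with hM
  have hMI : ∀ n, M ≤ n → f n ∈ I := by
    intro n hn
    by_contra hc
    exact hN0 (f n) hc n (le_trans (Finset.le_sup (Finset.mem_univ _)) hn) rfl
  set I' : Finset V := Finset.univ.filter (· ∈ I) with hI'
  have hI'ne : I'.Nonempty := ⟨f M, by simp [hI', hMI M le_rfl]⟩
  obtain ⟨vmax, hvmaxI', hvmaxmax⟩ := Finset.exists_max_image I' A.color hI'ne
  have hvmaxI : vmax ∈ I := by simpa [hI'] using hvmaxI'
  have hcolI : ∀ w ∈ I, A.color w ≤ A.color vmax := by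
    intro w hw
    exact hvmaxmax w (by simp [hI', hw])
  -- get two occurrences of vmax past M
  obtain ⟨n1, hn1M, hn1⟩ := hvmaxI M
  obtain ⟨n2, hn2gt, hn2⟩ := hvmaxI (n1 + 1)
  set m := n2 - n1 with hm
  have hmpos : 0 < m := by omega
  set g : ℕ → V := fun i => f (n1 + i) with hg
  set L : List V := (List.range m).map g with hL
  have hcyc : CycleIn A σ L := by
    refine ⟨?_, ?_, ?_⟩
    · simp [hL, List.range_eq_nil]; omega
    · rw [hL]; show List.IsChain _ _; rw [List.isChain_map]
      have hmeq : m = (m - 1) + 1 := by omega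
      rw [hmeq, List.isChain_range_succ]
      intro i hi
      have : n1 + (i + 1) = n1 + i + 1 := by omega
      simpa [hg, this] using hedge (n1 + i)
    · intro a b hhead hlast
      have hmeq : m = (m - 1) + 1 := by omega
      have ha : a = g 0 := by
        rw [hL, hmeq, List.range_succ_eq_map] at hhead
        simp at hhead
        exact hhead.symm
      have hb : b = g (m - 1) := by
        rw [hL, hmeq, List.range_succ, List.map_append] at hlast
        simp at hlast
        exact hlast.symm
      subst ha hb
      have h1 : n1 + (m - 1) + 1 = n2 := by omega
      have := hedge (n1 + (m - 1))
      rw [h1, hn2, ← hn1] at this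
      simpa [hg] using this
  have heven : Even ((A.color vmax : ℕ)) := by
    refine hr L hcyc vmax ?_ ?_
    · rw [hL]
      exact List.mem_map.mpr ⟨0, by simp [List.mem_range]; omega, by simp [hg, hn1]⟩
    · intro w hw
      rw [hL] at hw
      obtain ⟨i, hi, rfl⟩ := List.mem_map.mp hw
      exact hcolI _ (hMI (n1 + i) (by omega))
  have hwon : Won0B A π := by
    refine ⟨A.color vmax, heven, ?_, ?_⟩
    · intro N
      obtain ⟨n, hnN, hn⟩ := hvmaxI N
      exact ⟨n, hnN, vmax, by rw [hf n, hn], rfl⟩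
    · intro j hj
      refine ⟨M, fun n hn hcol => ?_⟩
      obtain ⟨v, hv, hvc⟩ := hcol
      rw [hf n] at hv
      obtain rfl : v = f n := by injection hv.symm
      have := hcolI (f n) (hMI n hn)
      rw [hvc] at this
      exact absurd hj (not_lt.mpr this)
  have hno : ¬∃ n, π n = none := by
    rintro ⟨n, hn⟩; exact hinf n hn
  rw [PlayValue, dif_neg hno, if_pos hwon]

end InfLemmas

section LoopLemmas
variable {V : Type} {d : ℕ}

lemma loop_play {A : PGA V d} {σ : V → Option V → Prop} {τ : V → V → Prop} {s : V}
    {π : ℕ → Option V} (hp : IsPlay A σ τ s π) {i j : ℕ} (hij : i < j)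
    (heq : π i = π j) (hjn : π j ≠ none) :
    ∃ π', IsPlay A σ τ s π' ∧ ∀ n, π' n ≠ none := by
  set t := j - i with ht
  have htpos : 0 < t := by omega
  set ρ : ℕ → ℕ := fun n => if n < j then n else i + (n - i) % t with hρ
  have hρlt : ∀ n, ρ n < j := by
    intro n
    simp only [hρ]
    split
    · omega
    · have := Nat.mod_lt (n - i) htpos
      omega
  refine ⟨fun n => π (ρ n), ⟨?_, ?_⟩, ?_⟩
  · show π (ρ 0) = some s
    have : ρ 0 = 0 := by simp only [hρ]; rw [if_pos (by omega)]
    rw [this]; exact hp.1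
  · intro n
    show PlayStep A σ τ (π (ρ n)) (π (ρ (n + 1)))
    have hmod : ∀ a : ℕ, (a + 1) % t = if a % t + 1 = t then 0 else a % t + 1 := by
      intro a
      conv_lhs => rw [← Nat.div_add_mod a t]
      rw [Nat.add_assoc, Nat.mul_add_mod]
      by_cases h : a % t + 1 = t
      · rw [if_pos h, h, Nat.mod_self]
      · rw [if_neg h]
        exact Nat.mod_eq_of_lt (by have := Nat.mod_lt a htpos; omega)
    by_cases h1 : n + 1 < j
    · have e1 : ρ n = n := by simp only [hρ]; rw [if_pos (by omega)]
      have e2 : ρ (n + 1) = n + 1 := by simp only [hρ]; rw [if_pos h1]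
      rw [e1, e2]; exact hp.2 n
    · by_cases h2 : n + 1 = j
      · have e1 : ρ n = n := by simp only [hρ]; rw [if_pos (by omega)]
        have e2 : ρ (n + 1) = i := by
          simp only [hρ, h2]
          rw [if_neg (lt_irrefl j), show j - i = t from rfl, Nat.mod_self]; omega
        have hst := hp.2 n
        rw [h2, ← heq] at hst
        rw [e1, e2]
        exact hst
      · have hnj : j ≤ n := by omega
        have e1 : ρ n = i + (n - i) % t := by simp only [hρ]; rw [if_neg (by omega)]
        have hsucc : n + 1 - i = (n - i) + 1 := by omega
        by_cases h3 : (n - i) % t + 1 = t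
        · have e2 : ρ (n + 1) = i := by
            simp only [hρ]
            rw [if_neg (by omega), hsucc, hmod, if_pos h3]; omega
          have e1' : ρ n = j - 1 := by
            rw [e1]; omega
          have hst := hp.2 (j - 1)
          have hj1 : j - 1 + 1 = j := by omega
          rw [hj1, ← heq] at hst
          rw [e1', e2]
          exact hst
        · have e2 : ρ (n + 1) = i + ((n - i) % t + 1) := by
            simp only [hρ]
            rw [if_neg (by omega), hsucc, hmod, if_neg h3]
          have hst := hp.2 (i + (n - i) % t)
          rw [e1, e2]
          have harith : i + (n - i) % t + 1 = i + ((n - i) % t + 1) := by omega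
          rw [← harith]
          exact hst
  · intro n hn
    exact hjn (none_absorb hp.2 hn j (le_of_lt (hρlt n)))

lemma play_bound [Fintype V] {A : PGA V d} {σ : V → Option V → Prop} {τ : V → V → Prop}
    {s : V} {π : ℕ → Option V} (hp : IsPlay A σ τ s π)
    (hno : ¬∃ π', IsPlay A σ τ s π' ∧ ∀ n, π' n ≠ none) :
    π (Fintype.card V) = none := by
  classical
  by_contra halive
  have hal : ∀ n, n ≤ Fintype.card V → π n ≠ none := by
    intro n hn hc
    exact halive (none_absorb hp.2 hc _ hn)
  have hex : ∀ n : Fin (Fintype.card V + 1), ∃ v, π (n : ℕ) = some v := by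
    intro n
    exact Option.ne_none_iff_exists'.mp (hal n (by omega))
  choose g hg using hex
  obtain ⟨x, y, hxy, hgxy⟩ := Fintype.exists_ne_map_eq_of_card_lt g (by simp)
  have hπ : π (x : ℕ) = π (y : ℕ) := by rw [hg x, hg y, hgxy]
  rcases lt_or_gt_of_ne (fun h => hxy (Fin.ext h) : (x : ℕ) ≠ (y : ℕ)) with hlt | hlt
  · exact hno (loop_play hp hlt hπ (hal _ (by omega)))
  · exact hno (loop_play hp hlt hπ.symm (hal _ (by omega)))

end LoopLemmas

section MainLemmas
variable {V : Type} {d : ℕ}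

lemma exists_maxQ [Fintype V] (A : PGA V d) {σ : V → Option V → Prop} {τ : V → V → Prop}
    (hσ : Strategy0 A σ) (hr : Reasonable A σ) (hτ : Strategy1 A τ) (s : V) :
    ∃ p, IsMaxOf { q | ∃ π, IsPlay A σ τ s π ∧ q = PlayValue A π } p := by
  classical
  set Q := { q | ∃ π, IsPlay A σ τ s π ∧ q = PlayValue A π } with hQ
  by_cases hinf : ∃ π', IsPlay A σ τ s π' ∧ ∀ n, π' n ≠ none
  · obtain ⟨π', hp', hinf'⟩ := hinf
    refine ⟨Prof.top, ⟨π', hp', (infinite_play_top A hτ hr hp' hinf').symm⟩, ?_⟩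
    intro q _
    exact profLe_top q
  · have hbnd : ∀ π, IsPlay A σ τ s π → π (Fintype.card V) = none :=
      fun π hπ => play_bound hπ hinf
    set T : Set (Fin d → ℤ) := { p | Prof.fin p ∈ Q } with hT
    have hQT : ∀ q ∈ Q, ∃ p ∈ T, q = Prof.fin p := by
      rintro q ⟨π, hπ, rfl⟩
      have hb : ∃ n, π n = none := ⟨_, hbnd π hπ⟩
      refine ⟨fun k => (((Finset.range (Nat.find hb)).filter
        (fun n => ColorAt A π n k)).card : ℤ), ?_, by rw [PlayValue, dif_pos hb]⟩
      exact ⟨π, hπ, by rw [PlayValue, dif_pos hb]⟩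
    have hTsub : T ⊆ Set.Icc (0 : Fin d → ℤ) (fun _ => (Fintype.card V : ℤ)) := by
      rintro p hp
      obtain ⟨π, hπ, hval⟩ := hp
      have hb : ∃ n, π n = none := ⟨_, hbnd π hπ⟩
      rw [PlayValue, dif_pos hb] at hval
      have hpe : p = fun k => (((Finset.range (Nat.find hb)).filter
          (fun n => ColorAt A π n k)).card : ℤ) := by
        injection hval
      have hfind : Nat.find hb ≤ Fintype.card V := Nat.find_min' hb (hbnd π hπ)
      constructor
      · intro k
        rw [hpe]
        positivity
      · intro k
        rw [hpe]
        have h1 : ((Finset.range (Nat.find hb)).filter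
            (fun n => ColorAt A π n k)).card ≤ Nat.find hb := by
          calc _ ≤ (Finset.range (Nat.find hb)).card := Finset.card_filter_le _ _
          _ = Nat.find hb := Finset.card_range _
        dsimp only
        exact_mod_cast le_trans h1 hfind
    have hTfin : T.Finite := (Set.finite_Icc _ _).subset hTsub
    have hTne : T.Nonempty := by
      obtain ⟨π0, hπ0⟩ := exists_play A hσ hτ s
      obtain ⟨p0, hp0, _⟩ := hQT (PlayValue A π0) ⟨π0, hπ0, rfl⟩
      exact ⟨p0, hp0⟩
    obtain ⟨pm, hpmF, hpmax⟩ := finset_max hTfin.toFinset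
      (by rwa [Set.Finite.toFinset_nonempty])
    have hpmT : pm ∈ T := (Set.Finite.mem_toFinset hTfin).mp hpmF
    refine ⟨Prof.fin pm, hpmT, ?_⟩
    intro q hq
    obtain ⟨p', hp'T, rfl⟩ := hQT q hq
    rcases hpmax p' ((Set.Finite.mem_toFinset hTfin).mpr hp'T) with rfl | hlt
    · exact Or.inl rfl
    · exact Or.inr hlt

end MainLemmas

/-- **Lemma 4.** Valuations are monotone under inclusion of strategies:
if `σ_a ⊆ σ_b` are both reasonable player-0 strategies, then `𝒱_{σ_a}(s) ≼ 𝒱_{σ_b}(s)`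
for all nodes `s`. -/
theorem valuation_monotone_in_strategy {V : Type} {d : ℕ} [Fintype V] (A : PGA V d)
    (σa σb : V → Option V → Prop) (Va Vb : Option V → Prof d)
    (ha : Strategy0 A σa) (hb : Strategy0 A σb)
    (hra : Reasonable A σa) (hrb : Reasonable A σb)
    (hsub : ∀ s t, σa s t → σb s t)
    (hVa : IsValuation A σa Va) (hVb : IsValuation A σb Vb) :
    ∀ x : Option V, Prof.Le (Va x) (Vb x) := by
  intro x
  cases x with
  | none => rw [hVa.1, hVb.1]; exact Or.inl rfl
  | some s =>
    obtain ⟨⟨τ, hτ, hmaxb⟩, hminb⟩ := hVb.2 s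
    obtain ⟨pa, hpa⟩ := exists_maxQ A ha hra hτ s
    have h1 : Prof.Le (Va (some s)) pa := (hVa.2 s).2 pa ⟨τ, hτ, hpa⟩
    have h2 : Prof.Le pa (Vb (some s)) := by
      obtain ⟨π, hπ, hval⟩ := hpa.1
      exact hmaxb.2 pa ⟨π, play_mono hsub hπ, hval⟩
    exact profLe_trans h1 h2
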